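/- Let φ ∈ 𝔑 with constant C_φ, let 1 ≤ p < ∞, f ∈ C_c(ℝ^d), and g ∈ L^p(ℝ^d, φ dx). Then the convolution f⋆g satisfies ‖f⋆g‖_{L^p(φ)} ≤ (∫_{ℝ^d} |f(x)| (1 + w_{p,φ}(|x|)) dx) ‖g‖_{L^p(φ)}, where w_{p,φ}(r) = (C_φ/p) r (1 + (C_φ/p) r e^{C_φ r/p}). -/

import Mathlib

open MeasureTheory

private lemma exp_le_aux {s : ℝ} (hs : 0 ≤ s) :
    Real.exp s ≤ 1 + s * (1 + s * Real.exp s) := by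
  have h0 := Real.add_one_le_exp (-s)
  rw [Real.exp_neg] at h0
  have hpos := Real.exp_pos s
  have h1 : Real.exp s ≤ 1 + s * Real.exp s := by
    have h2 : (1 - s) * Real.exp s ≤ 1 := by
      have := mul_le_mul_of_nonneg_right h0 hpos.le
      rw [inv_mul_cancel₀ hpos.ne'] at this
      nlinarith
    nlinarith
  nlinarith

private lemma phi_translate {d : ℕ} {Cφ : ℝ}
    (φ : EuclideanSpace ℝ (Fin d) → ℝ) (hφ1 : ContDiff ℝ 1 φ)
    (hφ0 : ∀ x, 0 ≤ φ x)
    (hgrad : ∀ x, ‖gradient φ x‖ ≤ Cφ * φ x)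
    (x t : EuclideanSpace ℝ (Fin d)) :
    φ x ≤ φ (x - t) * Real.exp (Cφ * ‖t‖) := by
  set y := x - t with hy
  have hdiff := hφ1.differentiable one_ne_zero
  have key : ∀ s ∈ Set.Icc (0:ℝ) 1,
      ‖φ (y + s • t)‖ ≤ gronwallBound (φ y) (Cφ * ‖t‖) 0 (s - 0) := by
    have hder : ∀ s : ℝ, HasDerivAt (fun s : ℝ => φ (y + s • t))
        (fderiv ℝ φ (y + s • t) t) s := by
      intro s
      have h1 : HasDerivAt (fun s : ℝ => y + s • t) t s := by
        simpa using ((hasDerivAt_id s).smul_const t).const_add y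
      exact ((hdiff (y + s • t)).hasFDerivAt.comp_hasDerivAt s h1)
    apply norm_le_gronwallBound_of_norm_deriv_right_le
      (f' := fun s => fderiv ℝ φ (y + s • t) t)
    · exact Continuous.continuousOn (by
        have : Continuous fun s : ℝ => φ (y + s • t) :=
          hφ1.continuous.comp (by continuity)
        exact this)
    · exact fun s _ => (hder s).hasDerivWithinAt
    · simp [abs_of_nonneg (hφ0 y)]
    · intro s _
      have hb : ‖fderiv ℝ φ (y + s • t) t‖ ≤ ‖gradient φ (y + s • t)‖ * ‖t‖ := by
        have : ‖fderiv ℝ φ (y + s • t)‖ = ‖gradient φ (y + s • t)‖ := by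
          rw [gradient]
          simp
        calc ‖fderiv ℝ φ (y + s • t) t‖ ≤ ‖fderiv ℝ φ (y + s • t)‖ * ‖t‖ :=
              (fderiv ℝ φ (y + s • t)).le_opNorm t
          _ = ‖gradient φ (y + s • t)‖ * ‖t‖ := by rw [this]
      refine hb.trans ?_
      have := hgrad (y + s • t)
      have hn : ‖φ (y + s • t)‖ = φ (y + s • t) := abs_of_nonneg (hφ0 _)
      rw [hn]
      nlinarith [norm_nonneg t, hφ0 (y + s • t)]
  have h1 := key 1 (by norm_num)
  rw [gronwallBound_ε0] at h1
  have : y + (1:ℝ) • t = x := by simp [hy]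
  rw [this] at h1
  simpa [abs_of_nonneg (hφ0 x)] using h1

open scoped ENNReal

set_option maxHeartbeats 1000000

theorem stmt4 (d : ℕ) (Cφ p : ℝ) (hC : 0 ≤ Cφ) (hp : 1 ≤ p)
    (φ : EuclideanSpace ℝ (Fin d) → ℝ) (hφ1 : ContDiff ℝ 1 φ)
    (hφ0 : ∀ x, 0 ≤ φ x) (hφi : Integrable φ) (hφne : φ ≠ 0)
    (hgrad : ∀ x, ‖gradient φ x‖ ≤ Cφ * φ x)
    (f g : EuclideanSpace ℝ (Fin d) → ℝ)
    (hfc : Continuous f) (hfs : HasCompactSupport f)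
    (hgm : AEStronglyMeasurable g volume)
    (hg : Integrable (fun x => |g x| ^ p * φ x)) :
    (∫ x, |∫ t, f t * g (x - t)| ^ p * φ x) ^ (1 / p) ≤
      (∫ x, |f x| * (1 + Cφ / p * ‖x‖ *
          (1 + Cφ / p * ‖x‖ * Real.exp (Cφ * ‖x‖ / p)))) *
        (∫ x, |g x| ^ p * φ x) ^ (1 / p) := by
  have hp0 : (0:ℝ) < p := lt_of_lt_of_le one_pos hp
  have hp0' : p ≠ 0 := hp0.ne'
  have hip : (0:ℝ) ≤ 1 / p := by positivity
  -- auxiliary functions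
  set h : EuclideanSpace ℝ (Fin d) → ℝ := fun t => |f t| * Real.exp (Cφ * ‖t‖ / p) with hh
  have hhc : Continuous h := by
    apply hfc.abs.mul
    exact Real.continuous_exp.comp ((continuous_const.mul continuous_norm).div_const p)
  have hhs : HasCompactSupport h := hfs.abs.mul_right
  have hhint : Integrable h := hhc.integrable_of_hasCompactSupport hhs
  have hhnn : ∀ t, 0 ≤ h t := fun t => by
    simp only [hh]; positivity
  set H : EuclideanSpace ℝ (Fin d) → ℝ≥0∞ := fun t => ENNReal.ofReal (h t) with hH
  set G : EuclideanSpace ℝ (Fin d) → ℝ≥0∞ :=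
    fun y => ENNReal.ofReal (|g y| * φ y ^ (1/p)) with hGdef
  have hGp : ∀ y, G y ^ p = ENNReal.ofReal (|g y| ^ p * φ y) := by
    intro y
    show ENNReal.ofReal (|g y| * φ y ^ (1/p)) ^ p = _
    rw [ENNReal.ofReal_rpow_of_nonneg
        (mul_nonneg (abs_nonneg _) (Real.rpow_nonneg (hφ0 y) _)) hp0.le,
      Real.mul_rpow (abs_nonneg _) (Real.rpow_nonneg (hφ0 y) _), one_div,
      Real.rpow_inv_rpow (hφ0 y) hp0']
  have hHm : Measurable H := ENNReal.measurable_ofReal.comp hhc.measurable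
  have hGm : AEMeasurable G volume := by
    apply ENNReal.measurable_ofReal.comp_aemeasurable
    exact hgm.norm.aemeasurable.mul
      ((hφ1.continuous.measurable.pow measurable_const).aemeasurable)
  set I := ∫⁻ t, H t with hIdef
  have hIeq : I = ENNReal.ofReal (∫ t, h t) :=
    (ofReal_integral_eq_lintegral_ofReal hhint (Filter.Eventually.of_forall hhnn)).symm
  have hIne : I ≠ ⊤ := by rw [hIeq]; exact ENNReal.ofReal_ne_top
  set J := ∫⁻ y, ENNReal.ofReal (|g y| ^ p * φ y) with hJdef
  have hJeq : J = ENNReal.ofReal (∫ y, |g y| ^ p * φ y) :=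
    (ofReal_integral_eq_lintegral_ofReal hg
      (Filter.Eventually.of_forall fun y => mul_nonneg (by positivity) (hφ0 y))).symm
  have hJne : J ≠ ⊤ := by rw [hJeq]; exact ENNReal.ofReal_ne_top
  -- weight translation inequality
  have hw : ∀ (x t : EuclideanSpace ℝ (Fin d)),
      φ x ^ (1/p) ≤ φ (x - t) ^ (1/p) * Real.exp (Cφ * ‖t‖ / p) := by
    intro x t
    have h0 := phi_translate φ hφ1 hφ0 hgrad x t
    calc φ x ^ (1/p) ≤ (φ (x - t) * Real.exp (Cφ * ‖t‖)) ^ (1/p) :=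
          Real.rpow_le_rpow (hφ0 x) h0 hip
      _ = φ (x - t) ^ (1/p) * Real.exp (Cφ * ‖t‖ / p) := by
          rw [Real.mul_rpow (hφ0 _) (Real.exp_pos _).le,
            Real.rpow_def_of_pos (Real.exp_pos _), Real.log_exp]
          ring_nf
  -- Step 1
  have step1 : ∀ x, ENNReal.ofReal (|∫ t, f t * g (x - t)| ^ p * φ x)
      ≤ (∫⁻ t, H t * G (x - t)) ^ p := by
    intro x
    set r : ℝ := ∫ t, |f t * g (x - t)| with hr
    have hrnn : 0 ≤ r := integral_nonneg fun t => abs_nonneg _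
    have hc : |∫ t, f t * g (x - t)| ≤ r := by
      have := norm_integral_le_integral_norm (μ := volume) (fun t => f t * g (x - t))
      simp only [Real.norm_eq_abs] at this
      exact this
    have h2 : ENNReal.ofReal (|∫ t, f t * g (x - t)| ^ p * φ x)
        ≤ ENNReal.ofReal ((r * φ x ^ (1/p)) ^ p) := by
      apply ENNReal.ofReal_le_ofReal
      rw [Real.mul_rpow hrnn (Real.rpow_nonneg (hφ0 x) _), one_div,
        Real.rpow_inv_rpow (hφ0 x) hp0']
      exact mul_le_mul_of_nonneg_right
        (Real.rpow_le_rpow (abs_nonneg _) hc hp0.le) (hφ0 x)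
    refine h2.trans ?_
    rw [← ENNReal.ofReal_rpow_of_nonneg
      (mul_nonneg hrnn (Real.rpow_nonneg (hφ0 x) _)) hp0.le]
    refine ENNReal.rpow_le_rpow ?_ hp0.le
    have hmr : r * φ x ^ (1/p) = ∫ t, |f t * g (x - t)| * φ x ^ (1/p) := by
      rw [hr, integral_mul_const]
    rw [hmr]
    calc ENNReal.ofReal (∫ t, |f t * g (x - t)| * φ x ^ (1/p))
        ≤ ∫⁻ t, ENNReal.ofReal (|f t * g (x - t)| * φ x ^ (1/p)) := by
          have hen := enorm_integral_le_lintegral_enorm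
            (μ := volume) (fun t => |f t * g (x - t)| * φ x ^ (1/p))
          refine le_trans ?_ (hen.trans (le_of_eq ?_))
          · rw [← Real.enorm_eq_ofReal (integral_nonneg fun t =>
              mul_nonneg (abs_nonneg _) (Real.rpow_nonneg (hφ0 x) _))]
          · congr 1 with t
            rw [← Real.enorm_eq_ofReal
              (mul_nonneg (abs_nonneg _) (Real.rpow_nonneg (hφ0 x) _))]
      _ ≤ ∫⁻ t, H t * G (x - t) := by
          apply lintegral_mono
          intro t
          have hpt : |f t * g (x - t)| * φ x ^ (1/p)
              ≤ h t * (|g (x - t)| * φ (x - t) ^ (1/p)) := by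
            rw [abs_mul]
            calc |f t| * |g (x - t)| * φ x ^ (1/p)
                ≤ |f t| * |g (x - t)| * (φ (x - t) ^ (1/p) * Real.exp (Cφ * ‖t‖ / p)) :=
                  mul_le_mul_of_nonneg_left (hw x t) (by positivity)
              _ = h t * (|g (x - t)| * φ (x - t) ^ (1/p)) := by
                  simp only [hh]; ring
          refine (ENNReal.ofReal_le_ofReal hpt).trans (le_of_eq ?_)
          rw [ENNReal.ofReal_mul (hhnn t)]
  -- Step 2
  have step2 : ∀ x, (∫⁻ t, H t * G (x - t)) ^ p
      ≤ I ^ (p - 1) * ∫⁻ t, H t * G (x - t) ^ p := by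
    intro x
    rcases eq_or_lt_of_le hp with hp1 | hp1
    · simp only [← hp1, sub_self, ENNReal.rpow_one, ENNReal.rpow_zero, one_mul]
      exact le_refl _
    · have hpq := Real.HolderConjugate.conjExponent hp1
      set q : ℝ := Real.conjExponent p with hq
      have hGx : AEMeasurable (fun t => G (x - t)) volume :=
        hGm.comp_quasiMeasurePreserving
          (quasiMeasurePreserving_sub_left_of_right_invariant volume x)
      have split : (fun t => H t * G (x - t))
          = fun t => (H t ^ (1/p) * G (x - t)) * H t ^ (1/q) := by
        funext t
        rw [mul_comm (H t ^ (1/p)) (G (x - t)), mul_assoc,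
          ← ENNReal.rpow_add_of_nonneg _ _ (by positivity) (le_of_lt hpq.symm.one_div_pos)]
        rw [one_div, one_div, hpq.inv_add_inv_eq_inv, inv_one, ENNReal.rpow_one, mul_comm]
      have key : (∫⁻ t, H t * G (x - t))
          ≤ (∫⁻ t, H t * G (x - t) ^ p) ^ (1/p) * I ^ (1/q) := by
        rw [split]
        have hholder := ENNReal.lintegral_mul_le_Lp_mul_Lq volume hpq
          (f := fun t => H t ^ (1/p) * G (x - t)) (g := fun t => H t ^ (1/q))
          (((hHm.pow measurable_const).aemeasurable).mul hGx)
          ((hHm.pow measurable_const).aemeasurable)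
        refine hholder.trans (le_of_eq ?_)
        congr 1
        · congr 1
          apply lintegral_congr
          intro t
          rw [ENNReal.mul_rpow_of_nonneg _ _ hp0.le, ← ENNReal.rpow_mul]
          rw [one_div_mul_cancel hp0', ENNReal.rpow_one]
        · congr 1
          apply lintegral_congr
          intro t
          rw [← ENNReal.rpow_mul, one_div_mul_cancel hpq.symm.ne_zero, ENNReal.rpow_one]
      calc (∫⁻ t, H t * G (x - t)) ^ p
          ≤ ((∫⁻ t, H t * G (x - t) ^ p) ^ (1/p) * I ^ (1/q)) ^ p :=
            ENNReal.rpow_le_rpow key hp0.le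
        _ = I ^ (p - 1) * ∫⁻ t, H t * G (x - t) ^ p := by
            rw [ENNReal.mul_rpow_of_nonneg _ _ hp0.le, ← ENNReal.rpow_mul,
              ← ENNReal.rpow_mul, one_div_mul_cancel hp0', ENNReal.rpow_one]
            rw [mul_comm]
            congr 1
            rw [show 1 / q * p = p / q by ring, hpq.div_conj_eq_sub_one]
  -- Step 3
  have step3 : (∫⁻ x, ∫⁻ t, H t * G (x - t) ^ p) = I * J := by
    have hGpm : AEMeasurable (fun y => G y ^ p) volume :=
      hGm.pow aemeasurable_const
    have hprod : AEMeasurable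
        (Function.uncurry fun x t => H t * G (x - t) ^ p)
        (volume.prod (volume : Measure (EuclideanSpace ℝ (Fin d)))) := by
      have h1 : AEMeasurable (fun z : EuclideanSpace ℝ (Fin d) × EuclideanSpace ℝ (Fin d) =>
          G (z.1 - z.2) ^ p) (volume.prod volume) := by
        have h2 : AEMeasurable (fun z : EuclideanSpace ℝ (Fin d) × EuclideanSpace ℝ (Fin d) =>
            G z.1 ^ p) (volume.prod volume) :=
          hGpm.comp_quasiMeasurePreserving Measure.quasiMeasurePreserving_fst
        exact h2.comp_quasiMeasurePreserving
          (measurePreserving_sub_prod volume volume).quasiMeasurePreserving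
      exact ((hHm.comp measurable_snd).aemeasurable).mul h1
    calc (∫⁻ x, ∫⁻ t, H t * G (x - t) ^ p)
        = ∫⁻ t, ∫⁻ x, H t * G (x - t) ^ p := lintegral_lintegral_swap hprod
      _ = ∫⁻ t, H t * ∫⁻ x, G (x - t) ^ p := by
          apply lintegral_congr
          intro t
          exact lintegral_const_mul' _ _ ENNReal.ofReal_ne_top
      _ = ∫⁻ t, H t * J := by
          apply lintegral_congr
          intro t
          congr 1
          rw [lintegral_sub_right_eq_self (fun y => G y ^ p) t]
          exact lintegral_congr fun y => hGp y
      _ = I * J := lintegral_mul_const' _ _ hJne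
  -- combine into lintegral bound
  have main : (∫⁻ x, ENNReal.ofReal (|∫ t, f t * g (x - t)| ^ p * φ x)) ≤ I ^ p * J := by
    calc (∫⁻ x, ENNReal.ofReal (|∫ t, f t * g (x - t)| ^ p * φ x))
        ≤ ∫⁻ x, I ^ (p - 1) * ∫⁻ t, H t * G (x - t) ^ p :=
          lintegral_mono fun x => (step1 x).trans (step2 x)
      _ = I ^ (p - 1) * ∫⁻ x, ∫⁻ t, H t * G (x - t) ^ p :=
          lintegral_const_mul' _ _ (ENNReal.rpow_ne_top_of_nonneg (by linarith) hIne)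
      _ = I ^ (p - 1) * (I * J) := by rw [step3]
      _ = I ^ p * J := by
          rw [← mul_assoc]
          congr 1
          calc I ^ (p - 1) * I = I ^ (p - 1) * I ^ (1:ℝ) := by rw [ENNReal.rpow_one]
            _ = I ^ p := by
              rw [← ENNReal.rpow_add_of_nonneg _ _ (by linarith) zero_le_one]
              norm_num
  -- from lintegral to integral
  have lhs_le : (∫ x, |∫ t, f t * g (x - t)| ^ p * φ x)
      ≤ (∫ t, h t) ^ p * ∫ y, |g y| ^ p * φ y := by
    have hrhs_nn : (0:ℝ) ≤ (∫ t, h t) ^ p * ∫ y, |g y| ^ p * φ y := by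
      have h1 : (0:ℝ) ≤ ∫ t, h t := integral_nonneg hhnn
      have h2 : (0:ℝ) ≤ ∫ y, |g y| ^ p * φ y :=
        integral_nonneg fun y => mul_nonneg (by positivity) (hφ0 y)
      positivity
    by_cases hint : Integrable (fun x => |∫ t, f t * g (x - t)| ^ p * φ x)
    · have hofr := ofReal_integral_eq_lintegral_ofReal hint
        (Filter.Eventually.of_forall fun x => mul_nonneg (by positivity) (hφ0 x))
      have hfin : I ^ p * J ≠ ⊤ :=
        ENNReal.mul_ne_top (ENNReal.rpow_ne_top_of_nonneg hp0.le hIne) hJne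
      have := ENNReal.toReal_mono hfin (hofr ▸ main)
      rw [ENNReal.toReal_ofReal
        (integral_nonneg fun x => mul_nonneg (by positivity) (hφ0 x))] at this
      refine this.trans_eq ?_
      rw [hIeq, hJeq, ENNReal.toReal_mul, ← ENNReal.toReal_rpow,
        ENNReal.toReal_ofReal (integral_nonneg hhnn),
        ENNReal.toReal_ofReal (integral_nonneg fun y =>
          mul_nonneg (by positivity) (hφ0 y))]
    · rw [integral_undef hint]
      exact hrhs_nn
  -- conclude
  have hg_nn : (0:ℝ) ≤ ∫ y, |g y| ^ p * φ y :=
    integral_nonneg fun y => mul_nonneg (by positivity) (hφ0 y)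
  have hlhs_nn : (0:ℝ) ≤ ∫ x, |∫ t, f t * g (x - t)| ^ p * φ x :=
    integral_nonneg fun x => mul_nonneg (by positivity) (hφ0 x)
  have hh_nn : (0:ℝ) ≤ ∫ t, h t := integral_nonneg hhnn
  calc (∫ x, |∫ t, f t * g (x - t)| ^ p * φ x) ^ (1/p)
      ≤ ((∫ t, h t) ^ p * ∫ y, |g y| ^ p * φ y) ^ (1/p) :=
        Real.rpow_le_rpow hlhs_nn lhs_le hip
    _ = (∫ t, h t) * (∫ y, |g y| ^ p * φ y) ^ (1/p) := by
        rw [Real.mul_rpow (by positivity) hg_nn, one_div,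
          Real.rpow_rpow_inv hh_nn hp0']
    _ ≤ _ := by
        apply mul_le_mul_of_nonneg_right _ (Real.rpow_nonneg hg_nn _)
        apply integral_mono hhint
        · apply Continuous.integrable_of_hasCompactSupport
          · apply hfc.abs.mul
            apply continuous_const.add
            apply ((continuous_const.mul continuous_norm)).mul
            apply continuous_const.add
            exact (continuous_const.mul continuous_norm).mul
              (Real.continuous_exp.comp ((continuous_const.mul continuous_norm).div_const p))
          · exact hfs.abs.mul_right
        · intro x
          simp only [hh]
          have hs : (0:ℝ) ≤ Cφ * ‖x‖ / p := by positivity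
          have := exp_le_aux hs
          have hrw : Cφ / p * ‖x‖ = Cφ * ‖x‖ / p := by ring
          rw [hrw]
          exact mul_le_mul_of_nonneg_left this (abs_nonneg _)
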